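/- Let ρ = |0⟩⟨0|_A ⊗ (1/2^b) I_B on a+b qubits with partition into C and D, |D| = d > a, and let H_D be a γ-gapped Hamiltonian on D with β > (d ln 2 + ln 3)/γ. For any unitary U, the probability that measuring C leaves D in the Gibbs state G_β(H_D) is at most 2^{a−d+1}. -/

import Mathlib

open Matrix BigOperators Kronecker
open scoped Classical ComplexOrder

noncomputable section

def ptraceFst {C D : Type*} [Fintype C] (σ : Matrix (C × D) (C × D) ℂ) :
    Matrix D D ℂ := Matrix.of fun y y' => ∑ j : C, σ (j, y) (j, y')

def ptraceSnd {C D : Type*} [Fintype D] (σ : Matrix (C × D) (C × D) ℂ) :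
    Matrix C C ℂ := Matrix.of fun x x' => ∑ j : D, σ (x, j) (x', j)

def posSemidefSqrtOld {n : Type*} [Fintype n] [DecidableEq n] {A : Matrix n n ℂ}
    (hA : A.PosSemidef) : Matrix n n ℂ :=
  (hA.1.eigenvectorUnitary : Matrix n n ℂ) *
    diagonal ((fun x : ℝ => (x : ℂ)) ∘ (hA.1.eigenvalues · |>.sqrt)) *
  (star hA.1.eigenvectorUnitary : Matrix n n ℂ)

def traceNorm {n : Type*} [Fintype n] [DecidableEq n] (M : Matrix n n ℂ) : ℝ :=
  (posSemidefSqrtOld (Matrix.posSemidef_conjTranspose_mul_self M)).trace.re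

def traceDist {n : Type*} [Fintype n] [DecidableEq n] (σ σ' : Matrix n n ℂ) : ℝ :=
  traceNorm (σ - σ') / 2

def IsDensity {n : Type*} [Fintype n] (M : Matrix n n ℂ) : Prop :=
  M.PosSemidef ∧ M.trace = 1

def IsPure {n : Type*} [Fintype n] (σ : Matrix n n ℂ) : Prop :=
  ∃ ψ : n → ℂ, (∑ i, Complex.normSq (ψ i)) = 1 ∧ σ = Matrix.vecMulVec ψ (star ψ)

def inputState (a b : ℕ) :
    Matrix (Fin (2^a) × Fin (2^b)) (Fin (2^a) × Fin (2^b)) ℂ :=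
  (Matrix.single 0 0 1) ⊗ₖ (((2:ℂ)^b)⁻¹ • (1 : Matrix (Fin (2^b)) (Fin (2^b)) ℂ))

def measSub {C D : Type*} [Fintype C] [Fintype D] (σ : Matrix (C × D) (C × D) ℂ) (j : C) :
    Matrix D D ℂ := Matrix.of fun y y' => σ (j, y) (j, y')

def measProb {C D : Type*} [Fintype C] [Fintype D] (σ : Matrix (C × D) (C × D) ℂ) (j : C) : ℝ :=
  ((measSub σ j).trace).re

def gibbs {n : Type*} [Fintype n] [DecidableEq n] (β : ℝ) {H : Matrix n n ℂ}
    (hH : H.IsHermitian) : Matrix n n ℂ :=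
  ((hH.cfc (fun x => Real.exp (-β * x))).trace)⁻¹ • hH.cfc (fun x => Real.exp (-β * x))

def vNEntropy {n : Type*} [Fintype n] [DecidableEq n] (M : Matrix n n ℂ) : ℝ :=
  if h : M.IsHermitian then -∑ i, (h.eigenvalues i) * Real.logb 2 (h.eigenvalues i) else 0

def iterState (n : ℕ) (U : ℕ → Matrix (Fin 2 × Fin (2^n)) (Fin 2 × Fin (2^n)) ℂ) :
    ℕ → Matrix (Fin (2^n)) (Fin (2^n)) ℂ
  | 0 => ((2:ℂ)^n)⁻¹ • 1
  | k+1 => ptraceFst (U k * ((Matrix.single 0 0 1) ⊗ₖ iterState n U k) * (U k)ᴴ)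


section Helpers

lemma qin (a b : ℕ) (z : Fin (2^a) × Fin (2^b) → ℂ) :
    star z ⬝ᵥ (inputState a b) *ᵥ z
      = ((((2:ℝ)^b)⁻¹ * ∑ k, Complex.normSq (z (0,k)) : ℝ) : ℂ) := by
  simp only [inputState, dotProduct, mulVec, Fintype.sum_prod_type,
    Matrix.kroneckerMap_apply, Matrix.single, Matrix.smul_apply, Matrix.one_apply,
    Matrix.of_apply, smul_eq_mul, Pi.star_apply, RCLike.star_def, ite_mul, mul_ite, one_mul,
    zero_mul, mul_zero, mul_one, ite_and, Finset.sum_ite_eq, Finset.sum_ite_eq',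
    Finset.mem_univ, if_true, Finset.sum_ite_irrel, Finset.sum_const_zero]
  push_cast
  rw [Finset.mul_sum]
  refine Finset.sum_congr rfl fun k _ => ?_
  rw [Complex.normSq_eq_conj_mul_self]; ring

lemma qid {n : Type*} [Fintype n] (z : n → ℂ) :
    star z ⬝ᵥ z = ((∑ p, Complex.normSq (z p) : ℝ) : ℂ) := by
  simp [dotProduct, ← Complex.normSq_eq_conj_mul_self]

lemma quad_conj {n : Type*} [Fintype n] (Umat M : Matrix n n ℂ) (x : n → ℂ) :
    star x ⬝ᵥ (Umat * M * Umatᴴ) *ᵥ x = star (Umatᴴ *ᵥ x) ⬝ᵥ M *ᵥ (Umatᴴ *ᵥ x) := by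
  rw [← Matrix.mulVec_mulVec, ← Matrix.mulVec_mulVec, Matrix.dotProduct_mulVec (star x) Umat,
    Matrix.star_mulVec, Matrix.conjTranspose_conjTranspose]

lemma norm_conj {n : Type*} [Fintype n] [DecidableEq n] (Umat : Matrix n n ℂ)
    (hU : Umat ∈ Matrix.unitaryGroup n ℂ) (x : n → ℂ) :
    star (Umatᴴ *ᵥ x) ⬝ᵥ (Umatᴴ *ᵥ x) = star x ⬝ᵥ x := by
  rw [Matrix.star_mulVec, Matrix.conjTranspose_conjTranspose, ← Matrix.dotProduct_mulVec,
    Matrix.mulVec_mulVec, (show Umat * Umatᴴ = 1 from Matrix.mem_unitaryGroup_iff.mp hU),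
    Matrix.one_mulVec]

lemma quad_reindex {m n : Type*} [Fintype m] [Fintype n] (e : m ≃ n) (M : Matrix m m ℂ)
    (x : n → ℂ) :
    star x ⬝ᵥ (Matrix.reindex e e M) *ᵥ x = star (x ∘ e) ⬝ᵥ M *ᵥ (x ∘ e) := by
  rw [Matrix.reindex_apply]
  have : (M.submatrix ⇑e.symm ⇑e.symm) *ᵥ x = (M *ᵥ (x ∘ ⇑e.symm.symm)) ∘ ⇑e.symm :=
    Matrix.submatrix_mulVec_equiv M x _ e.symm
  rw [this]
  simp only [Equiv.symm_symm, dotProduct]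
  refine Fintype.sum_equiv e.symm _ _ fun i => ?_
  simp [Function.comp]

lemma norm_eigvec {n : Type*} [Fintype n] [DecidableEq n] {A : Matrix n n ℂ}
    (hA : A.IsHermitian) (i₀ : n) :
    star (⇑(hA.eigenvectorBasis i₀) : n → ℂ) ⬝ᵥ (⇑(hA.eigenvectorBasis i₀) : n → ℂ) = (1 : ℂ) := by
  have hw : ((WithLp.equiv 2 (n → ℂ)) (hA.eigenvectorBasis i₀))
      = (⇑(hA.eigenvectorBasis i₀) : n → ℂ) := rfl
  have := EuclideanSpace.inner_eq_star_dotProduct (hA.eigenvectorBasis i₀) (hA.eigenvectorBasis i₀)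
  rw [dotProduct_comm] at this
  rw [← this, inner_self_eq_norm_sq_to_K, hA.eigenvectorBasis.orthonormal.1 i₀]
  norm_num

lemma quad_cfc {n : Type*} [Fintype n] [DecidableEq n] {A : Matrix n n ℂ} (hA : A.IsHermitian)
    (f : ℝ → ℝ) (i₀ : n) :
    star (⇑(hA.eigenvectorBasis i₀) : n → ℂ) ⬝ᵥ (hA.cfc f) *ᵥ (⇑(hA.eigenvectorBasis i₀) : n → ℂ)
      = (f (hA.eigenvalues i₀) : ℂ) := by
  have hw : ((WithLp.equiv 2 (n → ℂ)) (hA.eigenvectorBasis i₀))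
      = (⇑(hA.eigenvectorBasis i₀) : n → ℂ) := rfl
  rw [Matrix.IsHermitian.cfc, Unitary.conjStarAlgAut_apply, ← Matrix.mulVec_mulVec, ← Matrix.mulVec_mulVec,
    hA.star_eigenvectorUnitary_mulVec i₀, Matrix.diagonal_mulVec_single]
  have h1 : (Pi.single i₀ ((RCLike.ofReal ∘ f ∘ hA.eigenvalues) i₀ * 1) : n → ℂ)
      = ((f (hA.eigenvalues i₀) : ℂ)) • (Pi.single i₀ (1:ℂ) : n → ℂ) := by
    ext k
    by_cases h : k = i₀ <;> simp [h, Function.comp, Pi.single_apply]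
  rw [h1, Matrix.mulVec_smul, hA.eigenvectorUnitary_mulVec, dotProduct_smul, smul_eq_mul,
    norm_eigvec hA i₀, mul_one]

lemma trace_cfc {n : Type*} [Fintype n] [DecidableEq n] {A : Matrix n n ℂ} (hA : A.IsHermitian)
    (f : ℝ → ℝ) :
    (hA.cfc f).trace = ((∑ i, f (hA.eigenvalues i) : ℝ) : ℂ) := by
  rw [Matrix.IsHermitian.cfc, Unitary.conjStarAlgAut_apply, Matrix.trace_mul_cycle, Unitary.coe_star_mul_self, one_mul,
    Matrix.trace_diagonal]
  push_cast
  rfl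

lemma quad_measSub {C D : Type*} [Fintype C] [Fintype D] [DecidableEq C]
    (σ : Matrix (C × D) (C × D) ℂ) (j : C) (w : D → ℂ) :
    star (fun p : C × D => if p.1 = j then w p.2 else 0) ⬝ᵥ
        σ *ᵥ (fun p : C × D => if p.1 = j then w p.2 else 0)
      = star w ⬝ᵥ (measSub σ j) *ᵥ w := by
  simp only [measSub, dotProduct, mulVec, Fintype.sum_prod_type, Pi.star_apply, Matrix.of_apply,
    RCLike.star_def, mul_ite, ite_mul, zero_mul, mul_zero, map_zero,
    apply_ite (starRingEnd ℂ),
    Finset.sum_ite_eq, Finset.sum_ite_eq', Finset.mem_univ, if_true, Finset.sum_ite_irrel,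
    Finset.sum_const_zero]

lemma norm_emb {C D : Type*} [Fintype C] [Fintype D] [DecidableEq C] (j : C) (w : D → ℂ) :
    (∑ p : C × D, Complex.normSq (if p.1 = j then w p.2 else 0))
      = ∑ k, Complex.normSq (w k) := by
  rw [Fintype.sum_prod_type]
  simp [apply_ite Complex.normSq, Finset.sum_ite_eq']

lemma gibbs_ratio {n : Type*} [Fintype n] (d : ℕ) (hcard : Fintype.card n ≤ 2^d)
    (γ β : ℝ) (hγ : 0 < γ) (lam : n → ℝ) (i₀ : n)
    (hmin : ∀ i, lam i₀ ≤ lam i) (hgap : ∀ i, i ≠ i₀ → lam i₀ + γ ≤ lam i)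
    (hβ : β > (d * Real.log 2 + Real.log 3) / γ) :
    (∑ i, Real.exp (-β * lam i)) ≤ 4/3 * Real.exp (-β * lam i₀) := by
  have hnum : 0 < (d : ℝ) * Real.log 2 + Real.log 3 := by
    have h2 : (0:ℝ) ≤ (d:ℝ) * Real.log 2 := by positivity
    have h3 : (0:ℝ) < Real.log 3 := Real.log_pos (by norm_num)
    linarith
  have hβpos : 0 < β := lt_trans (div_pos hnum hγ) hβ
  have hβγ : (d : ℝ) * Real.log 2 + Real.log 3 < β * γ := by
    have := (div_lt_iff₀ hγ).mp hβ
    linarith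
  have hexp : Real.exp (-(β * γ)) < ((2:ℝ)^d)⁻¹ * 3⁻¹ := by
    have h1 : Real.exp (-(β * γ)) < Real.exp (-((d : ℝ) * Real.log 2 + Real.log 3)) :=
      Real.exp_lt_exp.mpr (by linarith)
    have h2 : Real.exp (-((d : ℝ) * Real.log 2 + Real.log 3)) = ((2:ℝ)^d)⁻¹ * 3⁻¹ := by
      rw [neg_add, Real.exp_add, Real.exp_neg, Real.exp_neg, Real.exp_log (by norm_num : (0:ℝ) < 3)]
      congr 2
      rw [Real.exp_nat_mul, Real.exp_log (by norm_num : (0:ℝ) < 2)]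
    linarith
  set E := Real.exp (-β * lam i₀) with hE
  have hEpos : 0 < E := Real.exp_pos _
  have hsplit : (∑ i, Real.exp (-β * lam i))
      = E + ∑ i ∈ Finset.univ.erase i₀, Real.exp (-β * lam i) := by
    rw [← Finset.add_sum_erase _ _ (Finset.mem_univ i₀)]
  have hterm : ∀ i ∈ Finset.univ.erase i₀, Real.exp (-β * lam i) ≤ E * Real.exp (-(β * γ)) := by
    intro i hi
    have hne : i ≠ i₀ := (Finset.mem_erase.mp hi).1
    have := hgap i hne
    have harg : -β * lam i ≤ -β * lam i₀ + -(β * γ) := by nlinarith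
    calc Real.exp (-β * lam i) ≤ Real.exp (-β * lam i₀ + -(β * γ)) := Real.exp_le_exp.mpr harg
      _ = E * Real.exp (-(β * γ)) := by rw [Real.exp_add]
  have hsum2 : ∑ i ∈ Finset.univ.erase i₀, Real.exp (-β * lam i)
      ≤ (2^d : ℝ) * (E * Real.exp (-(β * γ))) := by
    calc ∑ i ∈ Finset.univ.erase i₀, Real.exp (-β * lam i)
        ≤ ∑ _i ∈ Finset.univ.erase i₀, E * Real.exp (-(β * γ)) := Finset.sum_le_sum hterm
      _ = ((Finset.univ.erase i₀).card : ℝ) * (E * Real.exp (-(β * γ))) := by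
          rw [Finset.sum_const, nsmul_eq_mul]
      _ ≤ (2^d : ℝ) * (E * Real.exp (-(β * γ))) := by
          have hc : ((Finset.univ.erase i₀).card : ℝ) ≤ (2^d : ℝ) := by
            have := Finset.card_erase_le (s := (Finset.univ : Finset n)) (a := i₀)
            have h2 : (Finset.univ : Finset n).card ≤ 2^d := by
              simpa [Finset.card_univ] using hcard
            exact_mod_cast le_trans this h2
          have hpos : 0 ≤ E * Real.exp (-(β * γ)) := by positivity
          exact mul_le_mul_of_nonneg_right hc hpos
  have hfin : (2^d : ℝ) * (E * Real.exp (-(β * γ))) ≤ E * 3⁻¹ := by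
    have h1 : Real.exp (-(β * γ)) ≤ ((2:ℝ)^d)⁻¹ * 3⁻¹ := le_of_lt hexp
    have h2 : (0:ℝ) < (2:ℝ)^d := by positivity
    calc (2^d : ℝ) * (E * Real.exp (-(β * γ))) ≤ (2^d : ℝ) * (E * (((2:ℝ)^d)⁻¹ * 3⁻¹)) := by
          apply mul_le_mul_of_nonneg_left _ (le_of_lt h2)
          exact mul_le_mul_of_nonneg_left h1 (le_of_lt hEpos)
      _ = E * 3⁻¹ := by field_simp
  rw [hsplit]
  linarith

end Helpers

set_option maxHeartbeats 2000000 in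
theorem stmt14 (a b c d : ℕ) (hn : a + b = c + d) (hd : a < d) (γ β : ℝ) (hγ : 0 < γ)
    (H : Matrix (Fin (2^d)) (Fin (2^d)) ℂ) (hH : H.IsHermitian)
    (hgapped : ∃ i₀, (∀ i, hH.eigenvalues i₀ ≤ hH.eigenvalues i) ∧
        ∀ i, i ≠ i₀ → hH.eigenvalues i₀ + γ ≤ hH.eigenvalues i)
    (hβ : β > (d * Real.log 2 + Real.log 3) / γ)
    (e : (Fin (2^a) × Fin (2^b)) ≃ (Fin (2^c) × Fin (2^d)))
    (U : Matrix (Fin (2^c) × Fin (2^d)) (Fin (2^c) × Fin (2^d)) ℂ)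
    (hU : U ∈ Matrix.unitaryGroup (Fin (2^c) × Fin (2^d)) ℂ) :
    (∑ j : Fin (2^c),
        if measSub (U * (Matrix.reindex e e (inputState a b)) * Uᴴ) j
            = (measProb (U * (Matrix.reindex e e (inputState a b)) * Uᴴ) j : ℂ) • gibbs β hH
          then measProb (U * (Matrix.reindex e e (inputState a b)) * Uᴴ) j else 0)
      ≤ (2:ℝ)^((a:ℤ) - d + 1) := by
  obtain ⟨i₀, hmin, hgap⟩ := hgapped
  set σ := U * (Matrix.reindex e e (inputState a b)) * Uᴴ with hσ
  set lam := hH.eigenvalues with hlam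
  set E := Real.exp (-β * lam i₀) with hE
  set T := ∑ i, Real.exp (-β * lam i) with hT
  have hEpos : 0 < E := Real.exp_pos _
  have hTpos : 0 < T := Finset.sum_pos (fun i _ => Real.exp_pos _) ⟨i₀, Finset.mem_univ _⟩
  have hsum : T ≤ 4/3 * E :=
    gibbs_ratio d (by simp) γ β hγ lam i₀ hmin hgap hβ
  set r := T⁻¹ * E with hr
  have hr34 : 3/4 ≤ r := by
    rw [hr, ← div_eq_inv_mul]
    rw [le_div_iff₀ hTpos]
    linarith
  have hrpos : 0 < r := lt_of_lt_of_le (by norm_num) hr34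
  set w : Fin (2^d) → ℂ := ⇑(hH.eigenvectorBasis i₀) with hw
  have htrace : (hH.cfc (fun x => Real.exp (-β * x))).trace = ((T : ℝ) : ℂ) :=
    trace_cfc hH _
  have hquadG : star w ⬝ᵥ (gibbs β hH) *ᵥ w = ((r : ℝ) : ℂ) := by
    rw [gibbs, htrace, Matrix.smul_mulVec, dotProduct_smul, smul_eq_mul,
      quad_cfc hH _ i₀]
    rw [hr, hE]
    push_cast
    ring
  have hnormw : ∑ k, Complex.normSq (w k) = 1 := by
    have h1 := qid w
    rw [norm_eigvec hH i₀] at h1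
    exact_mod_cast h1.symm
  -- quadratic form bound for σ
  have hquadσ : ∀ x : Fin (2^c) × Fin (2^d) → ℂ, ∃ v : ℝ, 0 ≤ v ∧
      star x ⬝ᵥ σ *ᵥ x = ((v : ℝ) : ℂ) ∧
      v ≤ ((2:ℝ)^b)⁻¹ * ∑ p, Complex.normSq (x p) := by
    intro x
    refine ⟨((2:ℝ)^b)⁻¹ * ∑ k, Complex.normSq (((Uᴴ *ᵥ x) ∘ e) (0, k)),
      mul_nonneg (by positivity) (Finset.sum_nonneg fun k _ => Complex.normSq_nonneg _), ?_, ?_⟩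
    · rw [hσ, quad_conj, quad_reindex, qin]
    · have hynn : ∀ i : Fin (2^a), (0:ℝ) ≤ ∑ k, Complex.normSq (((Uᴴ *ᵥ x) ∘ e) (i, k)) := by
        intro i
        exact Finset.sum_nonneg fun k _ => Complex.normSq_nonneg _
      have h1 : ∑ k, Complex.normSq (((Uᴴ *ᵥ x) ∘ e) (0, k))
          ≤ ∑ p, Complex.normSq (((Uᴴ *ᵥ x) ∘ e) p) := by
        rw [Fintype.sum_prod_type]
        exact Finset.single_le_sum (f := fun i => ∑ k, Complex.normSq (((Uᴴ *ᵥ x) ∘ e) (i, k)))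
          (fun i _ => hynn i) (Finset.mem_univ 0)
      have h2 : ∑ p, Complex.normSq (((Uᴴ *ᵥ x) ∘ e) p) = ∑ p, Complex.normSq (x p) := by
        have ha : ∑ p, Complex.normSq (((Uᴴ *ᵥ x) ∘ e) p)
            = ∑ p, Complex.normSq ((Uᴴ *ᵥ x) p) :=
          Fintype.sum_equiv e _ _ fun p => rfl
        have hb := qid (Uᴴ *ᵥ x)
        rw [norm_conj U hU x, qid x] at hb
        have hb' : (∑ p, Complex.normSq ((Uᴴ *ᵥ x) p)) = ∑ p, Complex.normSq (x p) := by
          exact_mod_cast hb.symm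
        rw [ha, hb']
      have := mul_le_mul_of_nonneg_left (le_of_le_of_eq h1 h2)
        (by positivity : (0:ℝ) ≤ ((2:ℝ)^b)⁻¹)
      exact this
  -- per-outcome values
  have hv : ∀ j : Fin (2^c), ∃ v : ℝ, 0 ≤ v ∧
      star w ⬝ᵥ (measSub σ j) *ᵥ w = ((v : ℝ) : ℂ) ∧ v ≤ ((2:ℝ)^b)⁻¹ := by
    intro j
    obtain ⟨v, h0, heq, hle⟩ := hquadσ (fun p => if p.1 = j then w p.2 else 0)
    refine ⟨v, h0, ?_, ?_⟩
    · rw [← quad_measSub, heq]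
    · calc v ≤ ((2:ℝ)^b)⁻¹ * ∑ p : Fin (2^c) × Fin (2^d), Complex.normSq (if p.1 = j then w p.2 else 0) := hle
        _ = ((2:ℝ)^b)⁻¹ := by rw [norm_emb, hnormw, mul_one]
  choose v hv0 hveq hvle using hv
  set s := (∑ j : Fin (2^c),
      if measSub σ j = (measProb σ j : ℂ) • gibbs β hH then measProb σ j else 0) with hs
  have key : s * r ≤ (2:ℝ)^c * ((2:ℝ)^b)⁻¹ := by
    rw [hs, Finset.sum_mul]
    have hterm : ∀ j ∈ (Finset.univ : Finset (Fin (2^c))),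
        (if measSub σ j = (measProb σ j : ℂ) • gibbs β hH then measProb σ j else 0) * r ≤ v j := by
      intro j _
      by_cases hc : measSub σ j = (measProb σ j : ℂ) • gibbs β hH
      · rw [if_pos hc]
        have h1 : star w ⬝ᵥ (measSub σ j) *ᵥ w = ((measProb σ j * r : ℝ) : ℂ) := by
          rw [hc, Matrix.smul_mulVec, dotProduct_smul, smul_eq_mul, hquadG]
          push_cast
          ring
        have h2 : ((v j : ℝ) : ℂ) = ((measProb σ j * r : ℝ) : ℂ) := by
          rw [← hveq j, h1]
        have h3 : v j = measProb σ j * r := by exact_mod_cast h2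
        rw [← h3]
      · rw [if_neg hc, zero_mul]
        exact hv0 j
    calc ∑ j : Fin (2^c),
          (if measSub σ j = (measProb σ j : ℂ) • gibbs β hH then measProb σ j else 0) * r
        ≤ ∑ j, v j := Finset.sum_le_sum hterm
      _ ≤ ∑ _j : Fin (2^c), ((2:ℝ)^b)⁻¹ := Finset.sum_le_sum fun j _ => hvle j
      _ = (2:ℝ)^c * ((2:ℝ)^b)⁻¹ := by
          rw [Finset.sum_const, nsmul_eq_mul, Finset.card_univ, Fintype.card_fin]
          push_cast
          ring
  -- finish
  have hKnn : (0:ℝ) ≤ (2:ℝ)^c * ((2:ℝ)^b)⁻¹ := by positivity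
  have hs_le : s ≤ ((2:ℝ)^c * ((2:ℝ)^b)⁻¹) / r := (le_div_iff₀ hrpos).mpr key
  have hdiv : ((2:ℝ)^c * ((2:ℝ)^b)⁻¹) / r ≤ ((2:ℝ)^c * ((2:ℝ)^b)⁻¹) / (3/4) :=
    div_le_div_of_nonneg_left hKnn (by norm_num) hr34
  have hKeq : (2:ℝ)^c * ((2:ℝ)^b)⁻¹ = (2:ℝ)^a * ((2:ℝ)^d)⁻¹ := by
    have hpow : (2:ℝ)^a * (2:ℝ)^b = (2:ℝ)^c * (2:ℝ)^d := by
      rw [← pow_add, ← pow_add, hn]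
    have hb0 : (0:ℝ) < (2:ℝ)^b := by positivity
    have hd0 : (0:ℝ) < (2:ℝ)^d := by positivity
    field_simp
    linarith [hpow]
  have hRHS : (2:ℝ)^((a:ℤ) - d + 1) = 2 * ((2:ℝ)^a * ((2:ℝ)^d)⁻¹) := by
    rw [zpow_add₀ (two_ne_zero) ((a:ℤ) - d) 1, zpow_sub₀ (two_ne_zero), zpow_one,
      zpow_natCast, zpow_natCast]
    ring
  rw [hRHS]
  have h4 : ((2:ℝ)^c * ((2:ℝ)^b)⁻¹) / (3/4) ≤ 2 * ((2:ℝ)^a * ((2:ℝ)^d)⁻¹) := by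
    rw [hKeq]
    have : (0:ℝ) ≤ (2:ℝ)^a * ((2:ℝ)^d)⁻¹ := by positivity
    rw [div_le_iff₀ (by norm_num : (0:ℝ) < 3/4)]
    nlinarith
  calc s ≤ ((2:ℝ)^c * ((2:ℝ)^b)⁻¹) / r := hs_le
    _ ≤ ((2:ℝ)^c * ((2:ℝ)^b)⁻¹) / (3/4) := hdiv
    _ ≤ 2 * ((2:ℝ)^a * ((2:ℝ)^d)⁻¹) := h4


end
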